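/- arXiv:0707.2920 — 4 statements merged into one kernel-verified Lean document; each statement's English description precedes it below -/
import Mathlib

section
/- The family (z_1, ..., z_{2q}, 1) is linearly independent over the rationals, where z_i = \sum_{k\geq 1} p_i^{-N^{2k}} for 1 \leq i \leq q and z_{i+q} = \sum_{k\geq 1} p_i^{-N^{2k+1}} for 1 \leq i \leq q. -/
lemma pow_exp_ge {N : ℕ} (hN : 2 ≤ N) (j t : ℕ) : N ^ t + j ≤ N ^ (j + t) := by
  have h1 : j + 1 ≤ N ^ j := Nat.succ_le_of_lt (Nat.lt_pow_self (n := j) (by omega))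
  have h2 : N ^ (j + t) = N ^ j * N ^ t := by rw [pow_add]
  have h3 : (j + 1) * N ^ t ≤ N ^ j * N ^ t := Nat.mul_le_mul_right _ h1
  have h4 : 1 ≤ N ^ t := Nat.one_le_pow _ _ (by omega)
  nlinarith

lemma aux_summable (x : ℝ) (hx : 2 ≤ x) {N : ℕ} (hN : 2 ≤ N) (t : ℕ) :
    Summable fun j : ℕ => (x ^ (N ^ (j + t)))⁻¹ := by
  have hx1 : (1:ℝ) ≤ x := by linarith
  have hx0 : (0:ℝ) < x := by linarith
  have hgeom : Summable fun j : ℕ => (x⁻¹) ^ j :=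
    summable_geometric_of_lt_one (by positivity) (by
      rw [inv_lt_one_iff₀]; right; linarith)
  refine Summable.of_nonneg_of_le (fun j => by positivity) (fun j => ?_) hgeom
  rw [inv_pow, inv_le_inv₀ (by positivity) (by positivity)]
  exact pow_le_pow_right₀ hx1 (le_trans (by omega) (pow_exp_ge hN j t))

lemma aux_tsum_le (x : ℝ) (hx : 2 ≤ x) {N : ℕ} (hN : 2 ≤ N) (t : ℕ) :
    ∑' j : ℕ, (x ^ (N ^ (j + t)))⁻¹ ≤ 2 * (x ^ (N ^ t))⁻¹ := by
  have hx0 : (0:ℝ) < x := by linarith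
  have hx1 : (1:ℝ) ≤ x := by linarith
  have hlt : x⁻¹ < 1 := by rw [inv_lt_one_iff₀]; right; linarith
  have hsum : Summable fun j : ℕ => (x ^ (N ^ t))⁻¹ * (x⁻¹) ^ j :=
    (summable_geometric_of_lt_one (by positivity) hlt).mul_left _
  have hle : ∀ j : ℕ, (x ^ (N ^ (j + t)))⁻¹ ≤ (x ^ (N ^ t))⁻¹ * (x⁻¹) ^ j := by
    intro j
    rw [inv_pow, ← mul_inv, ← pow_add,
      inv_le_inv₀ (by positivity) (by positivity)]
    exact pow_le_pow_right₀ hx1 (pow_exp_ge hN j t)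
  calc ∑' j : ℕ, (x ^ (N ^ (j + t)))⁻¹
      ≤ ∑' j : ℕ, (x ^ (N ^ t))⁻¹ * (x⁻¹) ^ j :=
        Summable.tsum_le_tsum hle (aux_summable x hx hN t) hsum
    _ = (x ^ (N ^ t))⁻¹ * (1 - x⁻¹)⁻¹ := by
        rw [tsum_mul_left, tsum_geometric_of_lt_one (by positivity) hlt]
    _ ≤ (x ^ (N ^ t))⁻¹ * 2 := by
        gcongr
        rw [inv_le_iff_one_le_mul₀ (by rw [sub_pos]; linarith)]
        have : x⁻¹ ≤ 2⁻¹ := by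
          rw [inv_le_inv₀ hx0 (by norm_num)]; linarith
        linarith
    _ = 2 * (x ^ (N ^ t))⁻¹ := by ring

lemma power_sum_zero {q : ℕ} (p : Fin q → ℕ) (hp1 : ∀ i, 1 < p i) (hmono : StrictMono p)
    (a : Fin q → ℤ)
    (hvan : ∀ n : ℕ, ∃ E : ℕ, n ≤ E ∧ ∑ i, (a i : ℝ) * ((p i : ℝ) ^ E)⁻¹ = 0) :
    a = 0 := by
  by_contra hne
  obtain ⟨i1, hi1⟩ := Function.ne_iff.mp hne
  have hs : (Finset.univ.filter (fun i => a i ≠ 0)).Nonempty :=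
    ⟨i1, by simpa using hi1⟩
  set s := Finset.univ.filter (fun i => a i ≠ 0) with hsdef
  set i0 := s.min' hs with hi0def
  have hi0mem : i0 ∈ s := s.min'_mem hs
  have hai0 : a i0 ≠ 0 := by
    have := hi0mem; rw [hsdef, Finset.mem_filter] at this; exact this.2
  set C : ℝ := ∑ i, |(a i : ℝ)| with hC
  have hC1 : (1:ℝ) ≤ C := by
    calc (1:ℝ) ≤ |(a i0 : ℝ)| := by
          rw [← Int.cast_abs]; exact_mod_cast Int.one_le_abs hai0
      _ ≤ C := Finset.single_le_sum (f := fun i => |(a i : ℝ)|)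
          (fun i _ => abs_nonneg _) (Finset.mem_univ i0)
  have hx0 : (0:ℝ) < (p i0 : ℝ) := by exact_mod_cast Nat.zero_lt_of_lt (hp1 i0)
  set t : ℝ := ((p i0 : ℝ) + 1) / (p i0 : ℝ) with ht
  have ht1 : 1 < t := by
    rw [ht, lt_div_iff₀ hx0]; linarith
  have htend : Filter.Tendsto (fun n : ℕ => t ^ n) Filter.atTop Filter.atTop :=
    tendsto_pow_atTop_atTop_of_one_lt ht1
  obtain ⟨n0, hn0⟩ := (htend.eventually_gt_atTop C).exists_forall_of_atTop
  obtain ⟨E, hEn, hEsum⟩ := hvan n0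
  have hCt : C < t ^ E := hn0 E hEn
  -- split the sum
  have hsplit : (a i0 : ℝ) * ((p i0 : ℝ) ^ E)⁻¹
      = -∑ i ∈ Finset.univ.erase i0, (a i : ℝ) * ((p i : ℝ) ^ E)⁻¹ := by
    have := Finset.add_sum_erase Finset.univ
      (fun i => (a i : ℝ) * ((p i : ℝ) ^ E)⁻¹) (Finset.mem_univ i0)
    rw [hEsum] at this
    linarith
  have hy : ∀ i ∈ Finset.univ.erase i0,
      |(a i : ℝ)| * ((p i : ℝ) ^ E)⁻¹ ≤ |(a i : ℝ)| * (((p i0 : ℝ) + 1) ^ E)⁻¹ := by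
    intro i hi
    rcases eq_or_ne (a i) 0 with h0 | h0
    · simp [h0]
    · have hi0lt : i0 < i := by
        have hmem : i ∈ s := by rw [hsdef, Finset.mem_filter]; exact ⟨Finset.mem_univ _, h0⟩
        have hne' : i ≠ i0 := (Finset.mem_erase.mp hi).1
        exact lt_of_le_of_ne (s.min'_le i hmem) (Ne.symm hne')
      have hple : (p i0 : ℝ) + 1 ≤ (p i : ℝ) := by
        have : p i0 < p i := hmono hi0lt
        exact_mod_cast this
      have hpinv : ((p i : ℝ) ^ E)⁻¹ ≤ (((p i0 : ℝ) + 1) ^ E)⁻¹ := by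
        exact inv_anti₀ (by positivity) (pow_le_pow_left₀ (by positivity) hple E)
      exact mul_le_mul_of_nonneg_left hpinv (abs_nonneg _)
  have hyE : (0:ℝ) < ((p i0 : ℝ) + 1) ^ E := by positivity
  have hxE : (0:ℝ) < (p i0 : ℝ) ^ E := by positivity
  have h1 : |(a i0 : ℝ)| * ((p i0 : ℝ) ^ E)⁻¹ ≤ C * (((p i0 : ℝ) + 1) ^ E)⁻¹ := by
    calc |(a i0 : ℝ)| * ((p i0 : ℝ) ^ E)⁻¹
        = |(a i0 : ℝ) * ((p i0 : ℝ) ^ E)⁻¹| := by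
          rw [abs_mul, abs_of_nonneg (by positivity : (0:ℝ) ≤ ((p i0 : ℝ) ^ E)⁻¹)]
      _ = |∑ i ∈ Finset.univ.erase i0, (a i : ℝ) * ((p i : ℝ) ^ E)⁻¹| := by
          rw [hsplit, abs_neg]
      _ ≤ ∑ i ∈ Finset.univ.erase i0, |(a i : ℝ) * ((p i : ℝ) ^ E)⁻¹| :=
          Finset.abs_sum_le_sum_abs _ _
      _ = ∑ i ∈ Finset.univ.erase i0, |(a i : ℝ)| * ((p i : ℝ) ^ E)⁻¹ := by
          refine Finset.sum_congr rfl fun i _ => ?_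
          rw [abs_mul, abs_of_nonneg (by positivity : (0:ℝ) ≤ ((p i : ℝ) ^ E)⁻¹)]
      _ ≤ ∑ i ∈ Finset.univ.erase i0, |(a i : ℝ)| * (((p i0 : ℝ) + 1) ^ E)⁻¹ :=
          Finset.sum_le_sum hy
      _ = (∑ i ∈ Finset.univ.erase i0, |(a i : ℝ)|) * (((p i0 : ℝ) + 1) ^ E)⁻¹ :=
          (Finset.sum_mul _ _ _).symm
      _ ≤ C * (((p i0 : ℝ) + 1) ^ E)⁻¹ := by
          refine mul_le_mul_of_nonneg_right ?_ (by positivity)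
          exact Finset.sum_le_sum_of_subset_of_nonneg (Finset.erase_subset _ _)
            (fun i _ _ => abs_nonneg _)
  have habs1 : (1:ℝ) ≤ |(a i0 : ℝ)| := by
    rw [← Int.cast_abs]; exact_mod_cast Int.one_le_abs hai0
  have h2 : ((p i0 : ℝ) ^ E)⁻¹ ≤ C * (((p i0 : ℝ) + 1) ^ E)⁻¹ :=
    le_trans (le_mul_of_one_le_left (by positivity) habs1) h1
  have h3 : ((p i0 : ℝ) + 1) ^ E ≤ C * (p i0 : ℝ) ^ E := by
    rw [inv_le_iff_one_le_mul₀ hxE] at h2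
    calc ((p i0 : ℝ) + 1) ^ E = ((p i0 : ℝ) + 1) ^ E * 1 := (mul_one _).symm
      _ ≤ ((p i0 : ℝ) + 1) ^ E * (C * (((p i0 : ℝ) + 1) ^ E)⁻¹ * (p i0 : ℝ) ^ E) :=
          mul_le_mul_of_nonneg_left h2 (le_of_lt hyE)
      _ = C * (p i0 : ℝ) ^ E * (((p i0 : ℝ) + 1) ^ E * (((p i0 : ℝ) + 1) ^ E)⁻¹) := by ring
      _ = C * (p i0 : ℝ) ^ E := by rw [mul_inv_cancel₀ (ne_of_gt hyE), mul_one]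
  have h4 : t ^ E ≤ C := by
    rw [ht, div_pow, div_le_iff₀ hxE]
    linarith
  linarith

/-- With `q ≥ 2`, integers `1 < p 0 < ... < p (q-1)`, and an integer
`N > q * log p_q / log p_1`, the family `(z 1, ..., z (2q), 1)` is linearly independent
over `ℚ`, where `zA i = ∑_{k ≥ 1} (p i)^{-N^{2k}}` and `zB i = ∑_{k ≥ 1} (p i)^{-N^{2k+1}}`. -/
theorem stmt0 (q : ℕ) (hq : 2 ≤ q) (p : Fin q → ℕ) (hp1 : ∀ i, 1 < p i)
    (hmono : StrictMono p) (N : ℕ)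
    (hN : (q : ℝ) * Real.log (p ⟨q - 1, by omega⟩) / Real.log (p ⟨0, by omega⟩) < (N : ℝ))
    (zA zB : Fin q → ℝ)
    (hzA : ∀ i, zA i = ∑' k : ℕ, ((p i : ℝ) ^ (N ^ (2 * (k + 1))))⁻¹)
    (hzB : ∀ i, zB i = ∑' k : ℕ, ((p i : ℝ) ^ (N ^ (2 * (k + 1) + 1)))⁻¹)
    (a b : Fin q → ℤ) (c : ℤ)
    (h : ∑ i, ((a i : ℝ) * zA i + (b i : ℝ) * zB i) = (c : ℝ)) :
    a = 0 ∧ b = 0 ∧ c = 0 := by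
  classical
  have hp2 : ∀ i, (2:ℝ) ≤ (p i : ℝ) := fun i => by exact_mod_cast hp1 i
  set i₀ : Fin q := ⟨0, by omega⟩ with hi₀
  set iq : Fin q := ⟨q - 1, by omega⟩ with hiq
  have hle0 : ∀ i, p i₀ ≤ p i := fun i =>
    hmono.monotone (by simp [hi₀, Fin.le_def])
  have hleq : ∀ i, p i ≤ p iq := fun i =>
    hmono.monotone (by simp [hiq, Fin.le_def]; omega)
  have hlog1 : 0 < Real.log (p i₀) := Real.log_pos (by exact_mod_cast hp1 i₀)
  -- N ≥ 2
  have hNge : 2 ≤ N := by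
    have hlogq : Real.log (p i₀) ≤ Real.log (p iq) :=
      Real.log_le_log (by exact_mod_cast Nat.zero_lt_of_lt (hp1 i₀))
        (by exact_mod_cast hle0 iq)
    have h1 : (q:ℝ) ≤ (q:ℝ) * Real.log (p iq) / Real.log (p i₀) := by
      rw [le_div_iff₀ hlog1]
      have hq0 : (0:ℝ) ≤ (q:ℝ) := by positivity
      nlinarith
    have h2 : (2:ℝ) < (N:ℝ) := by
      have : (2:ℝ) ≤ (q:ℝ) := by exact_mod_cast hq
      linarith
    have h3 : 2 < N := by exact_mod_cast h2
    omega
  set P : ℕ := ∏ i, p i with hP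
  have hP1 : 1 ≤ P := Finset.one_le_prod' (fun i _ => le_of_lt (hp1 i))
  have hPle : P ≤ p iq ^ q := by
    calc P ≤ p iq ^ (Finset.univ : Finset (Fin q)).card :=
          Finset.prod_le_pow_card _ _ _ (fun i _ => hleq i)
      _ = p iq ^ q := by rw [Finset.card_univ, Fintype.card_fin]
  -- key: P < p i₀ ^ N
  have hkey : P < p i₀ ^ N := by
    have h1 : (q:ℝ) * Real.log (p iq) < (N:ℝ) * Real.log (p i₀) := by
      rw [div_lt_iff₀ hlog1] at hN
      exact hN
    have h2 : Real.log ((p iq : ℝ) ^ q) < Real.log ((p i₀ : ℝ) ^ N) := by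
      rw [Real.log_pow, Real.log_pow]; exact_mod_cast h1
    have h3 : ((p iq : ℝ)) ^ q < ((p i₀ : ℝ)) ^ N := by
      have hq0 : (0:ℝ) < (p iq : ℝ) ^ q := pow_pos (by linarith [hp2 iq]) q
      exact (Real.log_lt_log_iff hq0 (pow_pos (by linarith [hp2 i₀]) N)).mp h2
    have h4 : p iq ^ q < p i₀ ^ N := by exact_mod_cast (by push_cast; exact h3 :
      ((p iq ^ q : ℕ) : ℝ) < ((p i₀ ^ N : ℕ) : ℝ))
    omega
  -- definitions
  set coef : ℕ → Fin q → ℤ := fun j i => if Even j then a i else b i with hcoef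
  set S : Fin q → ℕ → ℝ := fun i j => ((p i : ℝ) ^ (N ^ (j + 2)))⁻¹ with hS
  set F : ℕ → ℝ := fun j => ∑ i, (coef j i : ℝ) * S i j with hF
  have hSsum : ∀ (i : Fin q) (t : ℕ), Summable fun j : ℕ => S i (j + t) := by
    intro i t
    simpa [hS, add_assoc] using aux_summable ((p i : ℝ)) (hp2 i) hNge (t + 2)
  have hSpos : ∀ (i : Fin q) (j : ℕ), 0 ≤ S i j := by
    intro i j; rw [hS]; positivity
  have hcoefbd : ∀ j i, |(coef j i : ℝ)| ≤ |(a i : ℝ)| + |(b i : ℝ)| := by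
    intro j i
    rw [hcoef]
    dsimp only
    split <;> [linarith [abs_nonneg ((b i : ℝ))]; linarith [abs_nonneg ((a i : ℝ))]]
  have htermsum : ∀ (i : Fin q) (t : ℕ),
      Summable fun j : ℕ => (coef (j + t) i : ℝ) * S i (j + t) := by
    intro i t
    apply Summable.of_norm_bounded (((hSsum i t).mul_left (|(a i : ℝ)| + |(b i : ℝ)|)))
    intro j
    rw [norm_mul, Real.norm_eq_abs, Real.norm_eq_abs, abs_of_nonneg (hSpos i _)]
    exact mul_le_mul_of_nonneg_right (hcoefbd _ i) (hSpos i _)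
  have hFtail : ∀ t : ℕ, Summable fun j : ℕ => F (j + t) := by
    intro t
    have := summable_sum (s := (Finset.univ : Finset (Fin q)))
      (f := fun i (j : ℕ) => (coef (j + t) i : ℝ) * S i (j + t))
      (fun i _ => htermsum i t)
    simpa [hF] using this
  have hFsum : Summable F := by
    have := hFtail 0
    simpa using this
  set G : ℕ → ℝ := fun m => ∑' j, F (j + m) with hG
  -- G 0 computation
  have hSesum : ∀ i : Fin q, Summable fun k : ℕ => S i (2 * k) := by
    intro i
    have h1 : Summable (S i) := by simpa using hSsum i 0
    exact h1.comp_injective (fun k l hkl => by omega)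
  have hSosum : ∀ i : Fin q, Summable fun k : ℕ => S i (2 * k + 1) := by
    intro i
    have h1 : Summable (S i) := by simpa using hSsum i 0
    exact h1.comp_injective (fun k l hkl => by omega)
  have heven : ∑' k : ℕ, F (2 * k) = ∑ i, (a i : ℝ) * zA i := by
    calc ∑' k : ℕ, F (2 * k) = ∑' k : ℕ, ∑ i, (a i : ℝ) * S i (2 * k) := by
          refine tsum_congr fun k => ?_
          rw [hF]
          refine Finset.sum_congr rfl fun i _ => ?_
          rw [hcoef]
          simp only [if_pos (even_two_mul k)]
      _ = ∑ i, ∑' k : ℕ, (a i : ℝ) * S i (2 * k) :=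
          Summable.tsum_finsetSum (fun i _ => (hSesum i).mul_left _)
      _ = ∑ i, (a i : ℝ) * zA i := by
          refine Finset.sum_congr rfl fun i _ => ?_
          rw [tsum_mul_left, hzA i]
          congr 1
  have hodd : ∑' k : ℕ, F (2 * k + 1) = ∑ i, (b i : ℝ) * zB i := by
    calc ∑' k : ℕ, F (2 * k + 1) = ∑' k : ℕ, ∑ i, (b i : ℝ) * S i (2 * k + 1) := by
          refine tsum_congr fun k => ?_
          rw [hF]
          refine Finset.sum_congr rfl fun i _ => ?_
          rw [hcoef]
          simp only [Nat.even_add_one, Nat.not_even_iff_odd]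
          rw [if_neg (by simp [Nat.even_add_one, parity_simps])]
      _ = ∑ i, ∑' k : ℕ, (b i : ℝ) * S i (2 * k + 1) :=
          Summable.tsum_finsetSum (fun i _ => (hSosum i).mul_left _)
      _ = ∑ i, (b i : ℝ) * zB i := by
          refine Finset.sum_congr rfl fun i _ => ?_
          rw [tsum_mul_left, hzB i]
          congr 1
  have hG0 : ∑' j : ℕ, F j = (c : ℝ) := by
    have hFe : Summable fun k : ℕ => F (2 * k) :=
      hFsum.comp_injective (fun k l hkl => by omega)
    have hFo : Summable fun k : ℕ => F (2 * k + 1) :=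
      hFsum.comp_injective (fun k l hkl => by omega)
    calc ∑' j : ℕ, F j = (∑' k : ℕ, F (2 * k)) + ∑' k : ℕ, F (2 * k + 1) :=
          (tsum_even_add_odd hFe hFo).symm
      _ = (∑ i, (a i : ℝ) * zA i) + ∑ i, (b i : ℝ) * zB i := by rw [heven, hodd]
      _ = ∑ i, ((a i : ℝ) * zA i + (b i : ℝ) * zB i) := Finset.sum_add_distrib.symm
      _ = (c : ℝ) := h
  have hGsplit : ∀ m : ℕ, (∑ j ∈ Finset.range m, F j) + G m = (c : ℝ) := by
    intro m
    rw [hG]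
    rw [Summable.sum_add_tsum_nat_add m hFsum, hG0]
  -- integrality
  have hint : ∀ m : ℕ, ∃ z : ℤ, ((P : ℝ)) ^ (N ^ (m + 2)) * G (m + 1) = (z : ℝ) := by
    intro m
    have hGm : G (m + 1) = (c : ℝ) - ∑ j ∈ Finset.range (m + 1), F j := by
      have := hGsplit (m + 1); linarith
    refine ⟨(P : ℤ) ^ (N ^ (m + 2)) * c -
      ∑ j ∈ Finset.range (m + 1), ∑ i,
        coef j i * ((P ^ (N ^ (m + 2)) / p i ^ (N ^ (j + 2)) : ℕ) : ℤ), ?_⟩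
    rw [hGm, mul_sub]
    push_cast
    congr 1
    rw [Finset.mul_sum]
    refine Finset.sum_congr rfl fun j hj => ?_
    rw [hF]
    dsimp only
    rw [Finset.mul_sum]
    refine Finset.sum_congr rfl fun i _ => ?_
    have hdvd : p i ^ (N ^ (j + 2)) ∣ P ^ (N ^ (m + 2)) := by
      have h1 : p i ∣ P := Finset.dvd_prod_of_mem p (Finset.mem_univ i)
      have h2 : N ^ (j + 2) ≤ N ^ (m + 2) := Nat.pow_le_pow_right (by omega)
        (by have := Finset.mem_range.mp hj; omega)
      exact dvd_trans (pow_dvd_pow_of_dvd h1 _) (pow_dvd_pow _ h2)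
    have hpne : ((p i : ℝ)) ^ (N ^ (j + 2)) ≠ 0 := by
      have := hp2 i; positivity
    have hdvdZ : ((p i : ℤ)) ^ (N ^ (j + 2)) ∣ ((P : ℤ)) ^ (N ^ (m + 2)) := by
      exact_mod_cast hdvd
    have hcast : ((((P : ℤ) ^ (N ^ (m + 2)) / (p i : ℤ) ^ (N ^ (j + 2)) : ℤ)) : ℝ)
        = (P : ℝ) ^ (N ^ (m + 2)) * ((p i : ℝ) ^ (N ^ (j + 2)))⁻¹ := by
      rw [Int.cast_div hdvdZ (by exact_mod_cast hpne)]
      push_cast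
      rw [div_eq_mul_inv]
    rw [hS]
    dsimp only
    rw [hcast]
    ring
  -- bound on tails
  set C : ℝ := ∑ i, (|(a i : ℝ)| + |(b i : ℝ)|) with hCdef
  have hC0 : 0 ≤ C := Finset.sum_nonneg fun i _ => by positivity
  have hFbd : ∀ k : ℕ, |F k| ≤ C * S i₀ k := by
    intro k
    rw [hF]
    dsimp only
    calc |∑ i, ((coef k i : ℝ) * S i k)| ≤ ∑ i, |(coef k i : ℝ) * S i k| :=
          Finset.abs_sum_le_sum_abs _ _
      _ ≤ ∑ i, (|(a i : ℝ)| + |(b i : ℝ)|) * S i₀ k := by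
          refine Finset.sum_le_sum fun i _ => ?_
          rw [abs_mul, abs_of_nonneg (hSpos i k)]
          have hSle : S i k ≤ S i₀ k := by
            rw [hS]
            dsimp only
            refine inv_anti₀ (pow_pos (by linarith [hp2 i₀]) _) ?_
            exact pow_le_pow_left₀ (by positivity) (by exact_mod_cast hle0 i) _
          exact mul_le_mul (hcoefbd k i) hSle (hSpos i k) (by positivity)
      _ = C * S i₀ k := by rw [hCdef, Finset.sum_mul]
  have hGbd : ∀ m : ℕ, |G (m + 1)| ≤ C * (2 * ((p i₀ : ℝ) ^ (N ^ (m + 3)))⁻¹) := by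
    intro m
    rw [hG]
    dsimp only
    have h1 : |∑' j : ℕ, F (j + (m + 1))| ≤ ∑' j : ℕ, |F (j + (m + 1))| := by
      have := norm_tsum_le_tsum_norm (f := fun j : ℕ => F (j + (m + 1)))
        ((hFtail (m + 1)).abs)
      simpa [Real.norm_eq_abs] using this
    have h2 : ∑' j : ℕ, |F (j + (m + 1))| ≤ ∑' j : ℕ, C * S i₀ (j + (m + 1)) :=
      Summable.tsum_le_tsum (fun j => hFbd (j + (m + 1))) ((hFtail (m + 1)).abs)
        ((hSsum i₀ (m + 1)).mul_left C)
    have h4 : ∑' j : ℕ, S i₀ (j + (m + 1)) ≤ 2 * ((p i₀ : ℝ) ^ (N ^ (m + 3)))⁻¹ := by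
      exact aux_tsum_le ((p i₀ : ℝ)) (hp2 i₀) hNge (m + 3)
    calc |∑' j : ℕ, F (j + (m + 1))| ≤ ∑' j : ℕ, C * S i₀ (j + (m + 1)) :=
          le_trans h1 h2
      _ = C * ∑' j : ℕ, S i₀ (j + (m + 1)) := tsum_mul_left
      _ ≤ C * (2 * ((p i₀ : ℝ) ^ (N ^ (m + 3)))⁻¹) :=
          mul_le_mul_of_nonneg_left h4 hC0
  -- smallness
  have hpiR : (0:ℝ) < (p i₀ : ℝ) := by linarith [hp2 i₀]
  set r : ℝ := (P : ℝ) / ((p i₀ : ℝ) ^ N) with hr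
  have hr0 : 0 ≤ r := by
    rw [hr]; positivity
  have hr1 : r < 1 := by
    rw [hr, div_lt_one (pow_pos hpiR N)]
    exact_mod_cast hkey
  have hratio : ∀ m : ℕ, (P : ℝ) ^ (N ^ (m + 2)) * ((p i₀ : ℝ) ^ (N ^ (m + 3)))⁻¹ ≤ r ^ m := by
    intro m
    have hexp : N ^ (m + 3) = N * N ^ (m + 2) := by ring
    have hpow : ((p i₀ : ℝ)) ^ (N ^ (m + 3)) = (((p i₀ : ℝ)) ^ N) ^ (N ^ (m + 2)) := by
      rw [← pow_mul, hexp]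
    have h1 : (P : ℝ) ^ (N ^ (m + 2)) * ((p i₀ : ℝ) ^ (N ^ (m + 3)))⁻¹
        = r ^ (N ^ (m + 2)) := by
      rw [hpow, hr, div_pow, div_eq_mul_inv]
    rw [h1]
    apply pow_le_pow_of_le_one hr0 (le_of_lt hr1)
    have := Nat.lt_pow_self (n := m + 2) (show 1 < N by omega)
    omega
  have htend : Filter.Tendsto (fun m : ℕ => (C * 2) * r ^ m) Filter.atTop (nhds 0) := by
    have := (tendsto_pow_atTop_nhds_zero_of_lt_one hr0 hr1).const_mul (C * 2)
    simpa using this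
  obtain ⟨m0, hm0⟩ := Filter.eventually_atTop.mp
    (htend.eventually_lt_const (by norm_num : (0:ℝ) < 1))
  -- vanishing of tails
  have hGzero : ∀ m : ℕ, m0 ≤ m → G (m + 1) = 0 := by
    intro m hm
    obtain ⟨z, hz⟩ := hint m
    have hPpos : (0:ℝ) < (P : ℝ) ^ (N ^ (m + 2)) := by
      have h1 : (1:ℝ) ≤ (P : ℝ) := by exact_mod_cast hP1
      positivity
    have habs : |(z : ℝ)| < 1 := by
      rw [← hz, abs_mul, abs_of_nonneg (le_of_lt hPpos)]
      calc (P:ℝ) ^ (N ^ (m+2)) * |G (m+1)|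
          ≤ (P:ℝ) ^ (N ^ (m+2)) * (C * (2 * ((p i₀:ℝ) ^ (N ^ (m+3)))⁻¹)) :=
            mul_le_mul_of_nonneg_left (hGbd m) (le_of_lt hPpos)
        _ = (C * 2) * ((P:ℝ) ^ (N ^ (m+2)) * ((p i₀:ℝ) ^ (N ^ (m+3)))⁻¹) := by ring
        _ ≤ (C * 2) * r ^ m := mul_le_mul_of_nonneg_left (hratio m) (by linarith)
        _ < 1 := hm0 m hm
    have hz0 : z = 0 := by
      have h1 : |z| < 1 := by exact_mod_cast habs
      exact Int.abs_lt_one_iff.mp h1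
    rw [hz0, Int.cast_zero] at hz
    rcases mul_eq_zero.mp hz with h' | h'
    · exact absurd h' (ne_of_gt hPpos)
    · exact h'
  have hFzero : ∀ m : ℕ, m0 + 1 ≤ m → F m = 0 := by
    intro m hm
    have h1 : G m = 0 := by
      have := hGzero (m - 1) (by omega)
      rwa [show m - 1 + 1 = m by omega] at this
    have h2 : G (m + 1) = 0 := hGzero m (by omega)
    have h3 : G m = F m + G (m + 1) := by
      rw [hG]
      dsimp only
      rw [Summable.tsum_eq_zero_add (hFtail m)]
      congr 1
      · rw [Nat.zero_add]
      · exact tsum_congr fun j => by rw [show j + 1 + m = j + (m + 1) by omega]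
    rw [h3, h2, add_zero] at h1
    exact h1
  -- conclude a = 0
  have ha : a = 0 := by
    apply power_sum_zero p hp1 hmono a
    intro n
    set m : ℕ := 2 * (n + m0) + 2 with hm
    have hFm := hFzero m (by omega)
    refine ⟨N ^ (m + 2), ?_, ?_⟩
    · have := Nat.lt_pow_self (n := m + 2) (show 1 < N by omega)
      omega
    · rw [hF] at hFm
      dsimp only at hFm
      have hevenm : Even m := ⟨n + m0 + 1, by omega⟩
      have heq : ∑ i, ((a i : ℝ) * ((p i : ℝ) ^ (N ^ (m + 2)))⁻¹)
          = ∑ i, ((coef m i : ℝ) * S i m) := by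
        refine Finset.sum_congr rfl fun i _ => ?_
        rw [hcoef, hS]
        dsimp only
        rw [if_pos hevenm]
      rw [heq]
      exact hFm
  have hb : b = 0 := by
    apply power_sum_zero p hp1 hmono b
    intro n
    set m : ℕ := 2 * (n + m0) + 3 with hm
    have hFm := hFzero m (by omega)
    refine ⟨N ^ (m + 2), ?_, ?_⟩
    · have := Nat.lt_pow_self (n := m + 2) (show 1 < N by omega)
      omega
    · rw [hF] at hFm
      dsimp only at hFm
      have hoddm : ¬ Even m := by
        rw [Nat.even_iff]
        omega
      have heq : ∑ i, ((b i : ℝ) * ((p i : ℝ) ^ (N ^ (m + 2)))⁻¹)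
          = ∑ i, ((coef m i : ℝ) * S i m) := by
        refine Finset.sum_congr rfl fun i _ => ?_
        rw [hcoef, hS]
        dsimp only
        rw [if_neg hoddm]
      rw [heq]
      exact hFm
  -- conclude c = 0
  have hF0 : ∀ j, F j = 0 := by
    intro j
    rw [hF]
    dsimp only
    refine Finset.sum_eq_zero fun i _ => ?_
    rw [hcoef]
    dsimp only
    split <;> simp [ha, hb]
  have hc : (c : ℝ) = 0 := by
    have h1 : ∑' j : ℕ, F j = 0 := (tsum_congr hF0).trans tsum_zero
    rw [hG0] at h1
    exact h1
  exact ⟨ha, hb, by exact_mod_cast hc⟩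

-- check axioms
end

section
/- Let L be a connected Lie group (or more generally a connected topological group), \Lambda \subset L a discrete subgroup, M a closed connected subgroup of L, and N a subgroup of L which is a countable union of closed sets. If M \subset N\Lambda, then M \subset N. -/
open Pointwise

/-- Let `L` be a connected topological group satisfying the Baire category
theorem on its closed subsets (e.g. a locally compact Lie group), `Λ` a countable
discrete subgroup, `M` a closed connected subgroup, and `N` a subgroup which is a
countable union of closed sets. If `M ⊆ N Λ` then `M ⊆ N`. -/
theorem stmt6 {L : Type*} [TopologicalSpace L] [Group L] [IsTopologicalGroup L]
    [LocallyCompactSpace L] [ConnectedSpace L]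
    (Λ M N : Subgroup L)
    (hΛcount : (Λ : Set L).Countable) (hΛdisc : DiscreteTopology Λ)
    (hMclosed : IsClosed (M : Set L)) (hMconn : IsConnected (M : Set L))
    (hN : ∃ C : ℕ → Set L, (∀ n, IsClosed (C n)) ∧ (N : Set L) = ⋃ n, C n)
    (h : (M : Set L) ⊆ (N : Set L) * (Λ : Set L)) :
    (M : Set L) ⊆ (N : Set L) := by
  obtain ⟨C, hCclosed, hCunion⟩ := hN
  haveI : Countable ↥Λ := hΛcount.to_subtype
  haveI : ConnectedSpace ↥M := isConnected_iff_connectedSpace.mp hMconn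
  haveI : LocallyCompactSpace ↥M := hMclosed.locallyCompactSpace
  have hCsubN : ∀ n, C n ⊆ (N : Set L) := by
    intro n
    rw [hCunion]
    exact Set.subset_iUnion C n
  -- the countable closed cover of `M`
  set f : ℕ × ↥Λ → Set ↥M :=
    fun p => {m : ↥M | (m : L) * (p.2 : L)⁻¹ ∈ C p.1} with hf
  have hfclosed : ∀ p, IsClosed (f p) := by
    intro p
    exact (hCclosed p.1).preimage (continuous_subtype_val.mul continuous_const)
  have hfcover : ⋃ p, f p = Set.univ := by
    ext m
    simp only [Set.mem_iUnion, Set.mem_univ, iff_true]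
    obtain ⟨n, hn, l, hl, hnl⟩ := h m.2
    obtain ⟨k, hk⟩ := Set.mem_iUnion.mp (hCunion ▸ hn)
    exact ⟨(k, ⟨l, hl⟩), by simpa [hf, ← hnl] using hk⟩
  -- Baire category: some piece has nonempty interior
  obtain ⟨p, x, hx⟩ := nonempty_interior_of_iUnion_of_closed hfclosed hfcover
  -- the subgroup `N ∩ M` of `M`
  set H : Subgroup ↥M := N.subgroupOf M with hH
  have hfN : ∀ y : ↥M, y ∈ f p → (y : L) * (x : L)⁻¹ ∈ N := by
    intro y hy
    have key : (y : L) * (x : L)⁻¹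
        = ((y : L) * (p.2 : L)⁻¹) * ((x : L) * (p.2 : L)⁻¹)⁻¹ := by group
    have hxf : x ∈ f p := interior_subset hx
    rw [key]
    exact N.mul_mem (hCsubN p.1 hy) (N.inv_mem (hCsubN p.1 hxf))
  -- `H` is open in `M`
  have hHopen : IsOpen (H : Set ↥M) := by
    apply Subgroup.isOpen_of_mem_nhds (g := (1 : ↥M))
    have hmap : (fun y : ↥M => y * x⁻¹) '' interior (f p) ∈ nhds (1 : ↥M) := by
      have : IsOpen ((fun y : ↥M => y * x⁻¹) '' interior (f p)) :=
        (isOpenMap_mul_right x⁻¹) _ isOpen_interior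
      exact this.mem_nhds ⟨x, hx, mul_inv_cancel x⟩
    refine Filter.mem_of_superset hmap ?_
    rintro - ⟨y, hy, rfl⟩
    have : ((y * x⁻¹ : ↥M) : L) ∈ N := by
      simpa using hfN y (interior_subset hy)
    exact this
  have hHclosed : IsClosed (H : Set ↥M) := H.isClosed_of_isOpen hHopen
  have hHuniv : (H : Set ↥M) = Set.univ :=
    IsClopen.eq_univ ⟨hHclosed, hHopen⟩ ⟨1, H.one_mem⟩
  intro m hm
  have : (⟨m, hm⟩ : ↥M) ∈ (H : Set ↥M) := hHuniv ▸ Set.mem_univ _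
  exact Subgroup.mem_subgroupOf.mp this
end

section
/- Let a_1,...,a_q, b_1,...,b_q, c be integers and suppose \sum_{i=1}^q (a_i z_i + b_i z_{i+q}) = c. Then for every integer k_0 \geq 1, the quantity (\prod_{i=1}^q p_i)^{N^{2k_0+1}} \cdot (\sum_{i=1}^q \sum_{k=1}^{k_0} (a_i p_i^{-N^{2k}} + b_i p_i^{-N^{2k+1}}) - c) is an integer, and its absolute value is at most 4q \max_i(|a_i|,|b_i|) \exp(N^{2k_0+1}(q \log p_q - N \log p_1)). -/
open Finset Real

lemma expo_le (N a k : ℕ) (hN : 2 ≤ N) : N ^ a + k ≤ N ^ (a + 2 * k) := by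
  have h1 : k + 1 ≤ 2 ^ (2 * k) := by
    calc k + 1 ≤ 2 ^ k := Nat.lt_two_pow_self
    _ ≤ 2 ^ (2 * k) := Nat.pow_le_pow_right (by norm_num) (by omega)
  have h2 : 2 ^ (2 * k) ≤ N ^ (2 * k) := Nat.pow_le_pow_left hN _
  have h3 : 1 ≤ N ^ a := Nat.one_le_pow _ _ (by omega)
  calc N ^ a + k ≤ N ^ a + (N ^ (2 * k) - 1) := by omega
  _ ≤ N ^ a * N ^ (2 * k) := by
      have h4 : 1 ≤ N ^ (2*k) := by omega
      zify [h4]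
      nlinarith [mul_le_mul' h3 h4]
  _ = N ^ (a + 2 * k) := by rw [pow_add]

lemma tail_sum {x : ℝ} (hx : 2 ≤ x) (f : ℕ → ℕ) (hf : ∀ k, f 0 + k ≤ f k) :
    Summable (fun k : ℕ => (x ^ f k)⁻¹) ∧
      ∑' k : ℕ, (x ^ f k)⁻¹ ≤ 2 * (x ^ f 0)⁻¹ := by
  have hx0 : (0:ℝ) < x := by linarith
  have hxi0 : (0:ℝ) ≤ x⁻¹ := by positivity
  have hxi : x⁻¹ ≤ 1/2 := by
    rw [inv_le_comm₀ hx0 (by norm_num)]; linarith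
  have key : ∀ k : ℕ, (x ^ f k)⁻¹ ≤ (x ^ f 0)⁻¹ * x⁻¹ ^ k := by
    intro k
    rw [← inv_pow, ← inv_pow, ← pow_add]
    exact pow_le_pow_of_le_one hxi0 (by linarith) (hf k)
  have hg : Summable (fun k : ℕ => (x ^ f 0)⁻¹ * x⁻¹ ^ k) :=
    (summable_geometric_of_lt_one hxi0 (by linarith)).mul_left _
  have hs : Summable (fun k : ℕ => (x ^ f k)⁻¹) :=
    Summable.of_nonneg_of_le (fun k => by positivity) key hg
  refine ⟨hs, ?_⟩
  calc ∑' k : ℕ, (x ^ f k)⁻¹ ≤ ∑' k : ℕ, (x ^ f 0)⁻¹ * x⁻¹ ^ k :=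
        Summable.tsum_le_tsum key hs hg
  _ = (x ^ f 0)⁻¹ * (1 - x⁻¹)⁻¹ := by
        rw [tsum_mul_left, tsum_geometric_of_lt_one hxi0 (by linarith)]
  _ ≤ (x ^ f 0)⁻¹ * 2 := by
        have h2 : (1 - x⁻¹)⁻¹ ≤ 2 := by
          rw [inv_le_comm₀ (by linarith) (by norm_num)]; linarith
        have : (0:ℝ) ≤ (x ^ f 0)⁻¹ := by positivity
        nlinarith
  _ = 2 * (x ^ f 0)⁻¹ := by ring

lemma tail_sum' {x : ℝ} (hx : 2 ≤ x) {N : ℕ} (hN : 2 ≤ N) (a : ℕ) :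
    Summable (fun k : ℕ => (x ^ (N ^ (a + 2 * k)))⁻¹) ∧
      ∑' k : ℕ, (x ^ (N ^ (a + 2 * k)))⁻¹ ≤ 2 * (x ^ (N ^ a))⁻¹ := by
  have := tail_sum hx (fun k => N ^ (a + 2 * k))
    (fun k => by simpa using expo_le N a k hN)
  simpa using this

/-- If `∑ i (a i * z i + b i * z_{i+q}) = c`, then for every `k₀ ≥ 1` the
quantity `(∏ p i)^{N^{2k₀+1}} (∑_{i} ∑_{k=1}^{k₀} (a i p_i^{-N^{2k}} + b i p_i^{-N^{2k+1}}) - c)`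
is an integer of absolute value at most
`4 q max_i(|a i|,|b i|) exp(N^{2k₀+1}(q log p_q - N log p_1))`. -/
theorem stmt18 (q : ℕ) (hq : 1 ≤ q) (p : Fin q → ℕ) (hp1 : ∀ i, 1 < p i)
    (hmono : StrictMono p) (N : ℕ)
    (hN : (q : ℝ) * Real.log (p ⟨q - 1, by omega⟩) / Real.log (p ⟨0, by omega⟩) < (N : ℝ))
    (zA zB : Fin q → ℝ)
    (hzA : ∀ i, zA i = ∑' k : ℕ, ((p i : ℝ) ^ (N ^ (2 * (k + 1))))⁻¹)
    (hzB : ∀ i, zB i = ∑' k : ℕ, ((p i : ℝ) ^ (N ^ (2 * (k + 1) + 1)))⁻¹)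
    (a b : Fin q → ℤ) (c : ℤ)
    (h : ∑ i, ((a i : ℝ) * zA i + (b i : ℝ) * zB i) = (c : ℝ))
    (k₀ : ℕ) (hk₀ : 1 ≤ k₀) :
    ∃ m : ℤ,
      (∏ i, (p i : ℝ)) ^ (N ^ (2 * k₀ + 1)) *
        ((∑ i, ∑ k ∈ Finset.Icc 1 k₀,
          ((a i : ℝ) * ((p i : ℝ) ^ (N ^ (2 * k)))⁻¹
            + (b i : ℝ) * ((p i : ℝ) ^ (N ^ (2 * k + 1)))⁻¹)) - (c : ℝ)) = (m : ℝ) ∧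
      |(m : ℝ)| ≤ 4 * q *
        ((Finset.univ.sup fun i => max (a i).natAbs (b i).natAbs : ℕ) : ℝ) *
        Real.exp ((N : ℝ) ^ (2 * k₀ + 1) *
          (q * Real.log (p ⟨q - 1, by omega⟩) - N * Real.log (p ⟨0, by omega⟩))) := by
  classical
  set p0 : ℕ := p ⟨0, by omega⟩ with hp0def
  set pq : ℕ := p ⟨q - 1, by omega⟩ with hpqdef
  have hp0 : 1 < p0 := hp1 _
  have hpq : 1 < pq := hp1 _
  have hlog0 : 0 < Real.log p0 := Real.log_pos (by exact_mod_cast hp0)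
  have hp0q : p0 ≤ pq := by
    exact hmono.monotone (by simp [Fin.mk_le_mk])
  have hlogle : Real.log p0 ≤ Real.log pq :=
    Real.log_le_log (by positivity) (by exact_mod_cast hp0q)
  -- N ≥ 2
  have hN2 : 2 ≤ N := by
    have h1 : (1:ℝ) ≤ (q:ℝ) * Real.log pq / Real.log p0 := by
      rw [le_div_iff₀ hlog0]
      have hq1 : (1:ℝ) ≤ (q:ℝ) := by exact_mod_cast hq
      nlinarith
    have : (1:ℝ) < (N:ℝ) := lt_of_le_of_lt h1 hN
    exact_mod_cast (by exact_mod_cast this : 1 < N)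
  have hN1 : 1 ≤ N := by omega
  set e : ℕ := N ^ (2 * k₀ + 1) with he
  have hp2 : ∀ i : Fin q, (2:ℝ) ≤ (p i : ℝ) := fun i => by exact_mod_cast hp1 i
  have hpipos : ∀ i : Fin q, (0:ℝ) < (p i : ℝ) := fun i => by
    have := hp2 i; linarith
  -- summability of the full series
  have hsA : ∀ i, Summable (fun k : ℕ => ((p i : ℝ) ^ (N ^ (2 + 2 * k)))⁻¹) :=
    fun i => (tail_sum' (hp2 i) hN2 2).1
  have hsB : ∀ i, Summable (fun k : ℕ => ((p i : ℝ) ^ (N ^ (3 + 2 * k)))⁻¹) :=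
    fun i => (tail_sum' (hp2 i) hN2 3).1
  -- rewrite z's
  have hrwA : ∀ i, zA i = ∑' k : ℕ, ((p i : ℝ) ^ (N ^ (2 + 2 * k)))⁻¹ := by
    intro i; rw [hzA i]
    apply tsum_congr; intro k
    rw [show 2 * (k + 1) = 2 + 2 * k by ring]
  have hrwB : ∀ i, zB i = ∑' k : ℕ, ((p i : ℝ) ^ (N ^ (3 + 2 * k)))⁻¹ := by
    intro i; rw [hzB i]
    apply tsum_congr; intro k
    rw [show 2 * (k + 1) + 1 = 3 + 2 * k by ring]
  -- partial sums and tails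
  set SA : Fin q → ℝ := fun i => ∑ k ∈ Finset.range k₀, ((p i : ℝ) ^ (N ^ (2 + 2 * k)))⁻¹
    with hSA
  set SB : Fin q → ℝ := fun i => ∑ k ∈ Finset.range k₀, ((p i : ℝ) ^ (N ^ (3 + 2 * k)))⁻¹
    with hSB
  set TA : Fin q → ℝ := fun i => ∑' k : ℕ, ((p i : ℝ) ^ (N ^ ((2 + 2 * k₀) + 2 * k)))⁻¹
    with hTA
  set TB : Fin q → ℝ := fun i => ∑' k : ℕ, ((p i : ℝ) ^ (N ^ ((3 + 2 * k₀) + 2 * k)))⁻¹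
    with hTB
  have hsplitA : ∀ i, zA i = SA i + TA i := by
    intro i
    rw [hrwA i, ← Summable.sum_add_tsum_nat_add k₀ (hsA i)]
    simp only [hSA, hTA]
    congr 1
    apply tsum_congr; intro k
    rw [show 2 + 2 * (k + k₀) = (2 + 2 * k₀) + 2 * k by ring]
  have hsplitB : ∀ i, zB i = SB i + TB i := by
    intro i
    rw [hrwB i, ← Summable.sum_add_tsum_nat_add k₀ (hsB i)]
    simp only [hSB, hTB]
    congr 1
    apply tsum_congr; intro k
    rw [show 3 + 2 * (k + k₀) = (3 + 2 * k₀) + 2 * k by ring]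
  -- tails bounds
  have hTAnn : ∀ i, 0 ≤ TA i := fun i => tsum_nonneg (fun k => by positivity)
  have hTBnn : ∀ i, 0 ≤ TB i := fun i => tsum_nonneg (fun k => by positivity)
  have hTAle : ∀ i, TA i ≤ 2 * ((p i : ℝ) ^ (N ^ (2 + 2 * k₀)))⁻¹ :=
    fun i => (tail_sum' (hp2 i) hN2 (2 + 2 * k₀)).2
  have hTBle : ∀ i, TB i ≤ 2 * ((p i : ℝ) ^ (N ^ (3 + 2 * k₀)))⁻¹ :=
    fun i => (tail_sum' (hp2 i) hN2 (3 + 2 * k₀)).2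
  -- the Icc partial sum equals SA/SB combination
  have hIcc : ∀ i, ∑ k ∈ Finset.Icc 1 k₀,
      ((a i : ℝ) * ((p i : ℝ) ^ (N ^ (2 * k)))⁻¹
        + (b i : ℝ) * ((p i : ℝ) ^ (N ^ (2 * k + 1)))⁻¹)
      = (a i : ℝ) * SA i + (b i : ℝ) * SB i := by
    intro i
    rw [hSA, hSB, Finset.mul_sum, Finset.mul_sum, ← Finset.sum_add_distrib]
    rw [show Finset.Icc 1 k₀ = Finset.Ico 1 (k₀ + 1) by rw [Finset.Ico_add_one_right_eq_Icc]]
    rw [Finset.sum_Ico_eq_sum_range]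
    simp only [Nat.add_sub_cancel]
    apply Finset.sum_congr rfl
    intro k _
    rw [show 2 * (1 + k) + 1 = 3 + 2 * k by ring, show 2 * (1 + k) = 2 + 2 * k by ring]
  -- the key real identity: S - c = -(tail sum)
  set S : ℝ := ∑ i, ∑ k ∈ Finset.Icc 1 k₀,
      ((a i : ℝ) * ((p i : ℝ) ^ (N ^ (2 * k)))⁻¹
        + (b i : ℝ) * ((p i : ℝ) ^ (N ^ (2 * k + 1)))⁻¹) with hSdef
  set T : ℝ := ∑ i, ((a i : ℝ) * TA i + (b i : ℝ) * TB i) with hTdef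
  have hScT : S - (c : ℝ) = -T := by
    have : (c : ℝ) = ∑ i, ((a i : ℝ) * (SA i + TA i) + (b i : ℝ) * (SB i + TB i)) := by
      rw [← h]
      apply Finset.sum_congr rfl
      intro i _
      rw [hsplitA i, hsplitB i]
    rw [hSdef, hTdef, this, ← Finset.sum_sub_distrib]
    rw [← Finset.sum_neg_distrib]
    apply Finset.sum_congr rfl
    intro i _
    rw [hIcc i]
    ring
  -- exponent bounds
  have hexp1 : ∀ k, k ∈ Finset.Icc 1 k₀ → N ^ (2 * k) ≤ e :=
    fun k hk => Nat.pow_le_pow_right (by omega)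
      (by simp only [Finset.mem_Icc] at hk; omega)
  have hexp2 : ∀ k, k ∈ Finset.Icc 1 k₀ → N ^ (2 * k + 1) ≤ e :=
    fun k hk => Nat.pow_le_pow_right (by omega)
      (by simp only [Finset.mem_Icc] at hk; omega)
  -- divisibility and casting
  set Pz : ℤ := ∏ j, (p j : ℤ) with hPz
  have hdvd : ∀ (i : Fin q) (E : ℕ), E ≤ e → (p i : ℤ) ^ E ∣ Pz ^ e := by
    intro i E hE
    exact (pow_dvd_pow _ hE).trans
      (pow_dvd_pow_of_dvd (Finset.dvd_prod_of_mem _ (Finset.mem_univ i)) e)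
  have hPcast : ((Pz : ℤ) : ℝ) = ∏ j, (p j : ℝ) := by
    rw [hPz]; push_cast; rfl
  have hcast : ∀ (i : Fin q) (E : ℕ), E ≤ e →
      ((Pz ^ e / (p i : ℤ) ^ E : ℤ) : ℝ)
        = (∏ j, (p j : ℝ)) ^ e * ((p i : ℝ) ^ E)⁻¹ := by
    intro i E hE
    rw [Int.cast_div_charZero (hdvd i E hE)]
    push_cast [hPcast]
    rw [div_eq_mul_inv]
  -- define m
  set mz : ℤ := (∑ i, ∑ k ∈ Finset.Icc 1 k₀,
      (a i * (Pz ^ e / (p i : ℤ) ^ (N ^ (2 * k)))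
        + b i * (Pz ^ e / (p i : ℤ) ^ (N ^ (2 * k + 1))))) - c * Pz ^ e with hmz
  have hmcast : (∏ i, (p i : ℝ)) ^ e * (S - (c : ℝ)) = (mz : ℝ) := by
    rw [hmz]
    push_cast
    rw [hSdef, mul_sub, Finset.mul_sum]
    congr 1
    · apply Finset.sum_congr rfl
      intro i _
      rw [Finset.mul_sum]
      apply Finset.sum_congr rfl
      intro k hk
      rw [hcast i _ (hexp1 k hk), hcast i _ (hexp2 k hk)]
      ring
    · rw [hPcast]; ring
  refine ⟨mz, hmcast, ?_⟩
  -- notation for the sup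
  set A : ℝ := ((Finset.univ.sup fun i => max (a i).natAbs (b i).natAbs : ℕ) : ℝ) with hA
  have hA0 : 0 ≤ A := by rw [hA]; positivity
  have habsa : ∀ i, |(a i : ℝ)| ≤ A := by
    intro i
    calc |(a i : ℝ)| = ((a i).natAbs : ℝ) := by rw [Nat.cast_natAbs, Int.cast_abs]
    _ ≤ A := by
        rw [hA]
        exact_mod_cast Nat.le_trans (le_max_left _ _)
          (Finset.le_sup (f := fun i => max (a i).natAbs (b i).natAbs) (Finset.mem_univ i))
  have habsb : ∀ i, |(b i : ℝ)| ≤ A := by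
    intro i
    calc |(b i : ℝ)| = ((b i).natAbs : ℝ) := by rw [Nat.cast_natAbs, Int.cast_abs]
    _ ≤ A := by
        rw [hA]
        exact_mod_cast Nat.le_trans (le_max_right _ _)
          (Finset.le_sup (f := fun i => max (a i).natAbs (b i).natAbs) (Finset.mem_univ i))
  -- tail comparison with p0
  have hp0le : ∀ i : Fin q, (p0 : ℝ) ≤ (p i : ℝ) := by
    intro i
    exact_mod_cast hmono.monotone (show (⟨0, by omega⟩ : Fin q) ≤ i by
      simp [Fin.le_def])
  have hp0R : (0:ℝ) < (p0 : ℝ) := by exact_mod_cast Nat.lt_of_lt_of_le Nat.zero_lt_one hp0.le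
  have hkey : ∀ (i : Fin q) (E : ℕ), N ^ (2 + 2 * k₀) ≤ E →
      ((p i : ℝ) ^ E)⁻¹ ≤ ((p0 : ℝ) ^ (N ^ (2 + 2 * k₀)))⁻¹ := by
    intro i E hE
    have h1 : (p0 : ℝ) ^ (N ^ (2 + 2 * k₀)) ≤ (p i : ℝ) ^ E := by
      calc (p0 : ℝ) ^ (N ^ (2 + 2 * k₀)) ≤ (p i : ℝ) ^ (N ^ (2 + 2 * k₀)) :=
            pow_le_pow_left₀ hp0R.le (hp0le i) _
      _ ≤ (p i : ℝ) ^ E := pow_le_pow_right₀ (by linarith [hp2 i]) hE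
    exact inv_anti₀ (by positivity) h1
  have hE12 : N ^ (2 + 2 * k₀) ≤ N ^ (3 + 2 * k₀) := Nat.pow_le_pow_right (by omega) (by omega)
  -- bound on T
  have hTbound : |T| ≤ (q : ℝ) * (4 * A * ((p0 : ℝ) ^ (N ^ (2 + 2 * k₀)))⁻¹) := by
    rw [hTdef]
    calc |∑ i, ((a i : ℝ) * TA i + (b i : ℝ) * TB i)|
        ≤ ∑ i, |(a i : ℝ) * TA i + (b i : ℝ) * TB i| := Finset.abs_sum_le_sum_abs _ _
    _ ≤ ∑ i : Fin q, (4 * A * ((p0 : ℝ) ^ (N ^ (2 + 2 * k₀)))⁻¹) := by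
        apply Finset.sum_le_sum
        intro i _
        have h1 : |(a i : ℝ) * TA i + (b i : ℝ) * TB i|
            ≤ |(a i : ℝ)| * TA i + |(b i : ℝ)| * TB i := by
          calc |(a i : ℝ) * TA i + (b i : ℝ) * TB i|
              ≤ |(a i : ℝ) * TA i| + |(b i : ℝ) * TB i| := abs_add_le _ _
          _ = |(a i : ℝ)| * TA i + |(b i : ℝ)| * TB i := by
              rw [abs_mul, abs_mul, abs_of_nonneg (hTAnn i), abs_of_nonneg (hTBnn i)]
        have h2 : TA i ≤ 2 * ((p0 : ℝ) ^ (N ^ (2 + 2 * k₀)))⁻¹ :=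
          (hTAle i).trans (by
            have := hkey i (N ^ (2 + 2 * k₀)) le_rfl
            linarith)
        have h3 : TB i ≤ 2 * ((p0 : ℝ) ^ (N ^ (2 + 2 * k₀)))⁻¹ :=
          (hTBle i).trans (by
            have := hkey i (N ^ (3 + 2 * k₀)) hE12
            linarith)
        have h4 : |(a i : ℝ)| * TA i ≤ A * (2 * ((p0 : ℝ) ^ (N ^ (2 + 2 * k₀)))⁻¹) :=
          mul_le_mul (habsa i) h2 (hTAnn i) hA0
        have h5 : |(b i : ℝ)| * TB i ≤ A * (2 * ((p0 : ℝ) ^ (N ^ (2 + 2 * k₀)))⁻¹) :=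
          mul_le_mul (habsb i) h3 (hTBnn i) hA0
        calc |(a i : ℝ) * TA i + (b i : ℝ) * TB i|
            ≤ A * (2 * ((p0 : ℝ) ^ (N ^ (2 + 2 * k₀)))⁻¹)
              + A * (2 * ((p0 : ℝ) ^ (N ^ (2 + 2 * k₀)))⁻¹) := by linarith
        _ = 4 * A * ((p0 : ℝ) ^ (N ^ (2 + 2 * k₀)))⁻¹ := by ring
    _ = (q : ℝ) * (4 * A * ((p0 : ℝ) ^ (N ^ (2 + 2 * k₀)))⁻¹) := by
        rw [Finset.sum_const, Finset.card_univ, Fintype.card_fin, nsmul_eq_mul]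
  -- bound on the product
  have hprodnn : (0:ℝ) ≤ ∏ i, (p i : ℝ) := Finset.prod_nonneg (fun i _ => (hpipos i).le)
  have hprodle : (∏ i, (p i : ℝ)) ^ e ≤ (pq : ℝ) ^ (q * e) := by
    have h1 : ∏ i, (p i : ℝ) ≤ (pq : ℝ) ^ q := by
      calc ∏ i, (p i : ℝ) ≤ ∏ _i : Fin q, (pq : ℝ) := by
            apply Finset.prod_le_prod (fun i _ => (hpipos i).le)
            intro i _
            exact_mod_cast hmono.monotone (show i ≤ (⟨q - 1, by omega⟩ : Fin q) by
              simp [Fin.le_def]; omega)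
      _ = (pq : ℝ) ^ q := by simp
    calc (∏ i, (p i : ℝ)) ^ e ≤ ((pq : ℝ) ^ q) ^ e := pow_le_pow_left₀ hprodnn h1 e
    _ = (pq : ℝ) ^ (q * e) := by rw [← pow_mul]
  -- exp identity
  have hpqR : (0:ℝ) < (pq : ℝ) := by exact_mod_cast Nat.lt_of_lt_of_le Nat.zero_lt_one hpq.le
  have hNe : N ^ (2 + 2 * k₀) = e * N := by
    rw [he, ← pow_succ]
    congr 1
    omega
  have hexpeq : Real.exp ((N : ℝ) ^ (2 * k₀ + 1) *
      ((q : ℝ) * Real.log pq - (N : ℝ) * Real.log p0))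
      = (pq : ℝ) ^ (q * e) * ((p0 : ℝ) ^ (N ^ (2 + 2 * k₀)))⁻¹ := by
    have hcastE : ((N : ℝ) ^ (2 * k₀ + 1)) = ((e : ℕ) : ℝ) := by rw [he]; push_cast; ring
    rw [hcastE, mul_sub, Real.exp_sub]
    rw [show ((e : ℕ) : ℝ) * ((q : ℝ) * Real.log pq) = ((q * e : ℕ) : ℝ) * Real.log pq by
      push_cast; ring]
    rw [show ((e : ℕ) : ℝ) * ((N : ℝ) * Real.log p0) = ((e * N : ℕ) : ℝ) * Real.log p0 by
      push_cast; ring]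
    rw [Real.exp_nat_mul, Real.exp_nat_mul, Real.exp_log hpqR, Real.exp_log hp0R]
    rw [hNe, div_eq_mul_inv]
  -- final chain
  rw [← hmcast, hScT]
  have habsval : |(∏ i, (p i : ℝ)) ^ e * -T| = (∏ i, (p i : ℝ)) ^ e * |T| := by
    rw [abs_mul, abs_neg, abs_of_nonneg (pow_nonneg hprodnn e)]
  rw [habsval, hexpeq]
  have hinv0 : (0:ℝ) ≤ ((p0 : ℝ) ^ (N ^ (2 + 2 * k₀)))⁻¹ := by positivity
  calc (∏ i, (p i : ℝ)) ^ e * |T|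
      ≤ (∏ i, (p i : ℝ)) ^ e * ((q : ℝ) * (4 * A * ((p0 : ℝ) ^ (N ^ (2 + 2 * k₀)))⁻¹)) :=
        mul_le_mul_of_nonneg_left hTbound (pow_nonneg hprodnn e)
  _ ≤ (pq : ℝ) ^ (q * e) * ((q : ℝ) * (4 * A * ((p0 : ℝ) ^ (N ^ (2 + 2 * k₀)))⁻¹)) := by
        apply mul_le_mul_of_nonneg_right hprodle
        positivity
  _ = 4 * (q : ℝ) * A * ((pq : ℝ) ^ (q * e) * ((p0 : ℝ) ^ (N ^ (2 + 2 * k₀)))⁻¹) := by ring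
end

section
/- For any integers n_1,...,n_q \geq 0 not all zero, set s to be an index maximizing p_s^{n_s}, and let k_0 = \lfloor \log(n_s)/(2 \log N) \rfloor. If N^{2k_0} \leq n_s \leq N^{2k_0+1}, then the fractional part of p_1^{n_1} \cdots p_q^{n_q} z_s is at most 2 p_s^{N^{2k_0+1}(q-N)}. -/
/-- For `n₁,...,n_q ≥ 0` not all zero, with `s` an index maximizing
`p_s^{n_s}` and `k₀ = ⌊log n_s / (2 log N)⌋`, if `N^{2k₀} ≤ n_s ≤ N^{2k₀+1}` then the
fractional part of `p_1^{n_1} ⋯ p_q^{n_q} z_s` is at most `2 p_s^{N^{2k₀+1}(q-N)}`. -/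
theorem stmt19 (q : ℕ) (hq : 1 ≤ q) (p : Fin q → ℕ) (hp1 : ∀ i, 1 < p i)
    (hmono : StrictMono p) (N : ℕ) (hN : q < N)
    (zA : Fin q → ℝ)
    (hzA : ∀ i, zA i = ∑' k : ℕ, ((p i : ℝ) ^ (N ^ (2 * (k + 1))))⁻¹)
    (n : Fin q → ℕ) (hn : n ≠ 0)
    (s : Fin q) (hs : ∀ r, p r ^ n r ≤ p s ^ n s)
    (k₀ : ℕ) (hk₀ : k₀ = ⌊Real.log (n s) / (2 * Real.log N)⌋₊)
    (hsand : N ^ (2 * k₀) ≤ n s ∧ n s ≤ N ^ (2 * k₀ + 1)) :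
    Int.fract ((∏ i, (p i : ℝ) ^ (n i)) * zA s) ≤
      2 * (p s : ℝ) ^ ((N : ℝ) ^ (2 * k₀ + 1) * ((q : ℝ) - (N : ℝ))) := by
  obtain ⟨hlo, hhi⟩ := hsand
  have hN2 : 2 ≤ N := lt_of_le_of_lt hq hN
  have hps2 : 2 ≤ p s := hp1 s
  have hpsR : (2:ℝ) ≤ (p s : ℝ) := by exact_mod_cast hps2
  have hpspos : (0:ℝ) < (p s : ℝ) := by linarith
  have hpsne : (p s : ℝ) ≠ 0 := ne_of_gt hpspos
  set f : ℕ → ℝ := fun k => ((p s : ℝ) ^ (N ^ (2 * (k + 1))))⁻¹ with hf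
  have hfnonneg : ∀ k, 0 ≤ f k := fun k => by positivity
  -- exponent growth: k + 1 ≤ N ^ (2 * (k + 1))
  have hexp : ∀ k : ℕ, k + 1 ≤ N ^ (2 * (k + 1)) := by
    intro k
    calc k + 1 ≤ 2 ^ (k + 1) := (k+1).lt_two_pow_self.le
    _ ≤ 2 ^ (2 * (k + 1)) := Nat.pow_le_pow_right (by norm_num) (by omega)
    _ ≤ N ^ (2 * (k + 1)) := Nat.pow_le_pow_left hN2 _
  -- termwise bound for summability
  have hfle : ∀ k, f k ≤ (1/2 : ℝ) ^ (k + 1) := by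
    intro k
    have h2 : (2:ℝ) ^ (k+1) ≤ (p s : ℝ) ^ (N ^ (2 * (k + 1))) := by
      calc (2:ℝ) ^ (k+1) ≤ (2:ℝ) ^ (N ^ (2 * (k + 1))) :=
            pow_le_pow_right₀ (by norm_num) (hexp k)
      _ ≤ (p s : ℝ) ^ (N ^ (2 * (k + 1))) := pow_le_pow_left₀ (by norm_num) hpsR _
    rw [one_div, inv_pow]
    exact inv_anti₀ (by positivity) h2
  have hsum : Summable f := by
    apply Summable.of_nonneg_of_le hfnonneg hfle
    have : Summable fun k : ℕ => (1/2 : ℝ) ^ k := summable_geometric_of_lt_one (by norm_num) (by norm_num)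
    simpa [pow_succ, mul_comm] using this.mul_right (1/2 : ℝ)
  set P : ℝ := ∏ i, (p i : ℝ) ^ (n i) with hP
  have hPpos : 0 < P := Finset.prod_pos fun i _ => by
    have : (0:ℝ) < (p i : ℝ) := by exact_mod_cast Nat.lt_trans Nat.zero_lt_one (hp1 i)
    positivity
  -- split the sum
  have hsplit : zA s = (∑ k ∈ Finset.range k₀, f k) + ∑' k, f (k + k₀) := by
    rw [hzA s, ← hsum.sum_add_tsum_nat_add k₀]
  set T : ℝ := ∑' k, f (k + k₀) with hT
  have hTsummable : Summable fun k => f (k + k₀) := (summable_nat_add_iff k₀).2 hsum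
  have hTnonneg : 0 ≤ T := tsum_nonneg fun k => hfnonneg _
  -- the head is a natural number
  obtain ⟨M, hM⟩ : ∃ M : ℕ, P * (∑ k ∈ Finset.range k₀, f k) = (M : ℝ) := by
    refine ⟨∑ k ∈ Finset.range k₀,
      (∏ i ∈ Finset.univ.erase s, p i ^ n i) * p s ^ (n s - N ^ (2 * (k + 1))), ?_⟩
    rw [Finset.mul_sum]
    push_cast
    refine Finset.sum_congr rfl fun k hk => ?_
    have hkk : k + 1 ≤ k₀ := Finset.mem_range.1 hk
    have hele : N ^ (2 * (k + 1)) ≤ n s := by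
      calc N ^ (2 * (k + 1)) ≤ N ^ (2 * k₀) :=
            Nat.pow_le_pow_right (by omega) (by omega)
      _ ≤ n s := hlo
    have hprod : P = (∏ i ∈ Finset.univ.erase s, (p i : ℝ) ^ n i) * (p s : ℝ) ^ n s := by
      rw [hP, ← Finset.prod_erase_mul _ _ (Finset.mem_univ s)]
    rw [hprod, pow_sub₀ _ hpsne hele]
    ring
  have hfract : Int.fract (P * zA s) = Int.fract (P * T) := by
    rw [hsplit, mul_add, hM, ← Int.cast_natCast, Int.fract_intCast_add]
  -- bound the tail
  have hA : ∀ k : ℕ, f (k + k₀) ≤ ((p s : ℝ) ^ (N ^ (2 * k₀ + 2)))⁻¹ * (1/2) ^ k := by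
    intro k
    have hAk : N ^ (2 * k₀ + 2) + k ≤ N ^ (2 * (k + k₀ + 1)) := by
      have h1 : N ^ (2 * (k + k₀ + 1)) = N ^ (2 * k₀ + 2) * N ^ (2 * k) := by
        rw [← pow_add]; ring_nf
      have h2 : k + 1 ≤ N ^ (2 * k) := by
        calc k + 1 ≤ 2 ^ k := k.lt_two_pow_self
        _ ≤ 2 ^ (2 * k) := Nat.pow_le_pow_right (by norm_num) (by omega)
        _ ≤ N ^ (2 * k) := Nat.pow_le_pow_left hN2 _
      have h3 : 1 ≤ N ^ (2 * k₀ + 2) := Nat.one_le_pow _ _ (by omega)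
      calc N ^ (2 * k₀ + 2) + k ≤ N ^ (2 * k₀ + 2) + N ^ (2 * k₀ + 2) * k := by
            nlinarith
      _ = N ^ (2 * k₀ + 2) * (k + 1) := by ring
      _ ≤ N ^ (2 * k₀ + 2) * N ^ (2 * k) := Nat.mul_le_mul_left _ h2
      _ = N ^ (2 * (k + k₀ + 1)) := h1.symm
    have hb : (p s : ℝ) ^ (N ^ (2 * k₀ + 2)) * 2 ^ k ≤ (p s : ℝ) ^ (N ^ (2 * (k + k₀ + 1))) := by
      calc (p s : ℝ) ^ (N ^ (2 * k₀ + 2)) * 2 ^ k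
          ≤ (p s : ℝ) ^ (N ^ (2 * k₀ + 2)) * (p s : ℝ) ^ k := by
            have : (2:ℝ) ^ k ≤ (p s : ℝ) ^ k := pow_le_pow_left₀ (by norm_num) hpsR _
            nlinarith [pow_pos hpspos (N ^ (2 * k₀ + 2))]
      _ = (p s : ℝ) ^ (N ^ (2 * k₀ + 2) + k) := (pow_add _ _ _).symm
      _ ≤ (p s : ℝ) ^ (N ^ (2 * (k + k₀ + 1))) := pow_le_pow_right₀ (by linarith) hAk
    have : f (k + k₀) = ((p s : ℝ) ^ (N ^ (2 * (k + k₀ + 1))))⁻¹ := by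
      simp [hf]
    rw [this, one_div, inv_pow, ← mul_inv]
    exact inv_anti₀ (by positivity) hb
  have hTle : T ≤ ((p s : ℝ) ^ (N ^ (2 * k₀ + 2)))⁻¹ * 2 := by
    have hg : Summable fun k : ℕ => ((p s : ℝ) ^ (N ^ (2 * k₀ + 2)))⁻¹ * (1/2) ^ k :=
      (summable_geometric_of_lt_one (by norm_num) (by norm_num)).mul_left _
    calc T ≤ ∑' k : ℕ, ((p s : ℝ) ^ (N ^ (2 * k₀ + 2)))⁻¹ * (1/2) ^ k :=
          Summable.tsum_le_tsum hA hTsummable hg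
    _ = ((p s : ℝ) ^ (N ^ (2 * k₀ + 2)))⁻¹ * 2 := by
        rw [tsum_mul_left, tsum_geometric_two]
  -- bound P
  have hPle : P ≤ (p s : ℝ) ^ (q * N ^ (2 * k₀ + 1)) := by
    have h1 : P ≤ ((p s : ℝ) ^ (n s)) ^ q := by
      rw [hP]
      calc ∏ i, (p i : ℝ) ^ (n i) ≤ ∏ _i : Fin q, (p s : ℝ) ^ (n s) :=
            Finset.prod_le_prod (fun i _ => by positivity)
              (fun i _ => by exact_mod_cast hs i)
      _ = ((p s : ℝ) ^ (n s)) ^ q := by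
          rw [Finset.prod_const, Finset.card_univ, Fintype.card_fin]
    calc P ≤ ((p s : ℝ) ^ (n s)) ^ q := h1
    _ = (p s : ℝ) ^ (n s * q) := by rw [← pow_mul]
    _ ≤ (p s : ℝ) ^ (N ^ (2 * k₀ + 1) * q) :=
        pow_le_pow_right₀ (by linarith) (Nat.mul_le_mul_right _ hhi)
    _ = (p s : ℝ) ^ (q * N ^ (2 * k₀ + 1)) := by rw [mul_comm]
  -- final combination
  have hRHS : 2 * (p s : ℝ) ^ ((N : ℝ) ^ (2 * k₀ + 1) * ((q : ℝ) - (N : ℝ)))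
      = (p s : ℝ) ^ (q * N ^ (2 * k₀ + 1)) * (((p s : ℝ) ^ (N ^ (2 * k₀ + 2)))⁻¹ * 2) := by
    have he : (N : ℝ) ^ (2 * k₀ + 1) * ((q : ℝ) - (N : ℝ))
        = ((q * N ^ (2 * k₀ + 1) : ℕ) : ℝ) - ((N ^ (2 * k₀ + 2) : ℕ) : ℝ) := by
      push_cast
      ring
    rw [he, Real.rpow_sub hpspos, Real.rpow_natCast, Real.rpow_natCast]
    field_simp
  rw [hfract, hRHS]
  have hPT : P * T ≤ (p s : ℝ) ^ (q * N ^ (2 * k₀ + 1)) * (((p s : ℝ) ^ (N ^ (2 * k₀ + 2)))⁻¹ * 2) :=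
    mul_le_mul hPle hTle hTnonneg (by positivity)
  refine le_trans ?_ hPT
  have hPTnn : 0 ≤ P * T := mul_nonneg hPpos.le hTnonneg
  have hfl : (0:ℝ) ≤ ⌊P * T⌋ := by exact_mod_cast Int.floor_nonneg.mpr hPTnn
  rw [Int.fract]
  linarith
end
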